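/- arXiv:1006.2792 — 3 statements merged into one kernel-verified Lean document; each statement's English description precedes it below -/
import Mathlib

section
/- For 0 < α < 1, the variable period T_α(x) = -x + (x^α + 2π)^(1/α) is strictly monotonically increasing on (0, ∞). -/
open Real

theorem stmt_4 (α : ℝ) (hα0 : 0 < α) (hα1 : α < 1) :
    StrictMonoOn (fun x : ℝ => -x + (x ^ α + 2 * π) ^ (1 / α)) (Set.Ioi 0) := by
  have hπ : 0 < π := Real.pi_pos
  have key : ∀ x ∈ Set.Ioi (0:ℝ),
      HasDerivAt (fun x : ℝ => -x + (x ^ α + 2 * π) ^ (1 / α))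
        (-1 + (1/α) * (x ^ α + 2 * π) ^ (1/α - 1) * (α * x ^ (α - 1))) x := by
    intro x hx
    have hx0 : (0:ℝ) < x := hx
    have hu : 0 < x ^ α + 2 * π := by positivity
    have h1 : HasDerivAt (fun x : ℝ => x ^ α + 2 * π) (α * x ^ (α - 1)) x := by
      simpa [mul_comm] using
        (Real.hasDerivAt_rpow_const (p := α) (Or.inl hx0.ne')).add_const (2*π)
    have h2 : HasDerivAt (fun t : ℝ => t ^ (1/α))
        ((1/α) * (x ^ α + 2*π) ^ (1/α - 1)) (x ^ α + 2*π) := by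
      simpa [mul_comm] using (Real.hasDerivAt_rpow_const (p := 1/α) (Or.inl hu.ne'))
    have h3 := h2.comp x h1
    exact (hasDerivAt_neg x).add h3
  apply strictMonoOn_of_deriv_pos (convex_Ioi 0)
  · exact fun x hx => ((key x hx).differentiableAt.continuousAt).continuousWithinAt
  · intro x hx
    rw [interior_Ioi] at hx
    rw [(key x hx).deriv]
    have hx0 : (0:ℝ) < x := hx
    have hα : α ≠ 0 := hα0.ne'
    have hz : 0 < 1/α - 1 := by
      rw [sub_pos, lt_div_iff₀ hα0]; linarith
    have hxα : (0:ℝ) < x ^ α := Real.rpow_pos_of_pos hx0 α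
    have hlt : (x ^ α) ^ (1/α - 1) < (x ^ α + 2*π) ^ (1/α - 1) :=
      Real.rpow_lt_rpow hxα.le (by linarith) hz
    have heq : (x ^ α) ^ (1/α - 1) = x ^ (1 - α) := by
      rw [← Real.rpow_mul hx0.le]
      congr 1
      field_simp
    have hB : (0:ℝ) < x ^ (α - 1) := Real.rpow_pos_of_pos hx0 _
    have hone : x ^ (1 - α) * x ^ (α - 1) = 1 := by
      rw [← Real.rpow_add hx0]; norm_num
    have hgt : 1 < (x ^ α + 2*π) ^ (1/α - 1) * x ^ (α - 1) := by
      calc 1 = x ^ (1 - α) * x ^ (α - 1) := hone.symm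
        _ < (x ^ α + 2*π) ^ (1/α - 1) * x ^ (α - 1) := by
            apply mul_lt_mul_of_pos_right _ hB
            rw [← heq]; exact hlt
    have hrw : (1/α) * (x ^ α + 2*π) ^ (1/α - 1) * (α * x ^ (α - 1))
        = (x ^ α + 2*π) ^ (1/α - 1) * x ^ (α - 1) := by
      field_simp
    rw [hrw]
    linarith
end

section
/- For α > 1, the variable period T_α(x) = -x + (x^α + 2π)^(1/α) is strictly monotonically decreasing on (0, ∞). -/
open Real

theorem stmt_5 (α : ℝ) (hα : 1 < α) :
    StrictAntiOn (fun x : ℝ => -x + (x ^ α + 2 * π) ^ (1 / α)) (Set.Ioi 0) := by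
  have hα0 : (0:ℝ) < α := by linarith
  apply strictAntiOn_of_deriv_neg (convex_Ioi 0)
  · apply ContinuousOn.add
    · exact continuousOn_id.neg
    · apply ContinuousOn.rpow_const
      · exact (continuousOn_id.rpow_const fun x hx => Or.inr hα0.le).add continuousOn_const
      · intro x hx
        have hx0 : (0:ℝ) < x := hx
        have : (0:ℝ) < x ^ α + 2 * π := by positivity
        exact Or.inl this.ne'
  · intro x hx
    rw [interior_Ioi] at hx
    have hx0 : (0:ℝ) < x := hx
    have hb : (0:ℝ) < x ^ α + 2 * π := by positivity
    have h1 : HasDerivAt (fun y : ℝ => y ^ α) (α * x ^ (α - 1)) x :=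
      Real.hasDerivAt_rpow_const (Or.inl hx0.ne')
    have h2 : HasDerivAt (fun y : ℝ => y ^ α + 2 * π) (α * x ^ (α - 1)) x :=
      h1.add_const _
    have h3 : HasDerivAt (fun y : ℝ => (y ^ α + 2 * π) ^ (1 / α))
        (α * x ^ (α - 1) * (1 / α) * (x ^ α + 2 * π) ^ (1 / α - 1)) x :=
      h2.rpow_const (Or.inl hb.ne')
    have h4 : HasDerivAt (fun y : ℝ => -y + (y ^ α + 2 * π) ^ (1 / α))
        (-1 + α * x ^ (α - 1) * (1 / α) * (x ^ α + 2 * π) ^ (1 / α - 1)) x :=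
      ((hasDerivAt_id x).neg).add h3
    rw [h4.deriv]
    have hsimp : α * x ^ (α - 1) * (1 / α) = x ^ (α - 1) := by
      field_simp
    rw [hsimp]
    have hp : (0:ℝ) < (α - 1) / α := div_pos (by linarith) hα0
    have key : x ^ (α - 1) * (x ^ α + 2 * π) ^ (1 / α - 1) < 1 := by
      have e1 : x ^ (α - 1) = (x ^ α) ^ ((α - 1) / α) := by
        rw [← Real.rpow_mul hx0.le]
        congr 1
        field_simp
      have e2 : (x ^ α + 2 * π) ^ (1 / α - 1) = ((x ^ α + 2 * π) ^ ((α - 1) / α))⁻¹ := by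
        rw [← Real.rpow_neg hb.le]
        congr 1
        field_simp
        ring
      rw [e1, e2, ← div_eq_mul_inv, div_lt_one (by positivity)]
      exact Real.rpow_lt_rpow (by positivity) (by have := Real.pi_pos; linarith) hp
    linarith
end

section
/- Let α > 0, x₀ ≥ 0, and T(x₀) = -x₀ + (x₀^α + 2π)^(1/α). Then for all positive integers m ≠ n, ∫ from x₀ to x₀ + T(x₀) of x^(α-1) · sin(m x^α) · sin(n x^α) dx = 0. -/
open Real

theorem stmt_9 (α x₀ : ℝ) (hα : 0 < α) (hx₀ : 0 ≤ x₀)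
    (T : ℝ) (hT : T = -x₀ + (x₀ ^ α + 2 * π) ^ (1 / α))
    (m n : ℕ) (hm : 0 < m) (hn : 0 < n) (hmn : m ≠ n) :
    ∫ x in x₀..(x₀ + T), x ^ (α - 1) * Real.sin (m * x ^ α) * Real.sin (n * x ^ α) = 0 := by
  set b : ℝ := (x₀ ^ α + 2 * π) ^ (1 / α) with hb
  have hab : x₀ + T = b := by rw [hT]; ring
  rw [hab]
  set c₁ : ℝ := (m : ℝ) - n with hc₁
  set c₂ : ℝ := (m : ℝ) + n with hc₂
  have hc₁0 : c₁ ≠ 0 := sub_ne_zero.mpr (by exact_mod_cast hmn)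
  have hc₂0 : c₂ ≠ 0 := by positivity
  have hα0 : α ≠ 0 := hα.ne'
  have hpos : (0:ℝ) ≤ x₀ ^ α + 2 * π := by positivity
  have hbnn : 0 ≤ b := Real.rpow_nonneg hpos _
  have hbα : b ^ α = x₀ ^ α + 2 * π := by
    rw [hb, one_div, Real.rpow_inv_rpow hpos hα0]
  have hle : x₀ ≤ b := by
    have h1 : (x₀ ^ α) ^ (1/α) ≤ b := by
      apply Real.rpow_le_rpow (by positivity) _ (by positivity)
      nlinarith [Real.pi_pos]
    calc x₀ = (x₀ ^ α) ^ (1/α) := by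
            rw [one_div, Real.rpow_rpow_inv hx₀ hα0]
      _ ≤ b := h1
  set F : ℝ → ℝ := fun x => (1/(2*α)) *
      (Real.sin (c₁ * x ^ α) / c₁ - Real.sin (c₂ * x ^ α) / c₂) with hF
  have hcont : Continuous fun x : ℝ => x ^ α := by
    rw [continuous_iff_continuousAt]
    intro x
    exact Real.continuousAt_rpow_const x α (Or.inr hα.le)
  have hFcont : ContinuousOn F (Set.Icc x₀ b) := by
    apply Continuous.continuousOn
    fun_prop
  have hderiv : ∀ x ∈ Set.Ioo x₀ b, HasDerivAt F
      (x ^ (α - 1) * Real.sin (m * x ^ α) * Real.sin (n * x ^ α)) x := by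
    intro x hx
    have hx0 : 0 < x := lt_of_le_of_lt hx₀ hx.1
    have h1 : HasDerivAt (fun x : ℝ => x ^ α) (α * x ^ (α - 1)) x :=
      Real.hasDerivAt_rpow_const (Or.inl hx0.ne')
    have d1 : HasDerivAt (fun x : ℝ => Real.sin (c₁ * x ^ α))
        (Real.cos (c₁ * x ^ α) * (c₁ * (α * x ^ (α - 1)))) x :=
      (Real.hasDerivAt_sin _).comp x (h1.const_mul c₁)
    have d2 : HasDerivAt (fun x : ℝ => Real.sin (c₂ * x ^ α))
        (Real.cos (c₂ * x ^ α) * (c₂ * (α * x ^ (α - 1)))) x :=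
      (Real.hasDerivAt_sin _).comp x (h1.const_mul c₂)
    have d : HasDerivAt F ((1/(2*α)) *
        (Real.cos (c₁ * x ^ α) * (c₁ * (α * x ^ (α - 1))) / c₁
          - Real.cos (c₂ * x ^ α) * (c₂ * (α * x ^ (α - 1))) / c₂)) x :=
      ((d1.div_const c₁).sub (d2.div_const c₂)).const_mul _
    convert d using 1
    have e1 : c₁ * x ^ α = m * x ^ α - n * x ^ α := by rw [hc₁]; ring
    have e2 : c₂ * x ^ α = m * x ^ α + n * x ^ α := by rw [hc₂]; ring
    rw [e1, e2, Real.cos_sub, Real.cos_add]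
    field_simp
    ring
  have hint : IntervalIntegrable
      (fun x => x ^ (α - 1) * Real.sin (m * x ^ α) * Real.sin (n * x ^ α))
      MeasureTheory.volume x₀ b := by
    have h1 : IntervalIntegrable (fun x : ℝ => x ^ (α - 1))
        MeasureTheory.volume x₀ b :=
      intervalIntegral.intervalIntegrable_rpow' (by linarith)
    have h2 := h1.mul_continuousOn (g := fun x =>
        Real.sin (m * x ^ α) * Real.sin (n * x ^ α)) (by fun_prop)
    simpa [mul_assoc] using h2
  rw [intervalIntegral.integral_eq_sub_of_hasDerivAt_of_le hle hFcont hderiv hint]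
  have key : ∀ c : ℤ, Real.sin ((c : ℝ) * b ^ α) = Real.sin ((c : ℝ) * x₀ ^ α) := by
    intro c
    rw [hbα]
    have : (c : ℝ) * (x₀ ^ α + 2 * π) = (c : ℝ) * x₀ ^ α + c * (2 * π) := by ring
    rw [this, Real.sin_add_int_mul_two_pi]
  have k1 : Real.sin (c₁ * b ^ α) = Real.sin (c₁ * x₀ ^ α) := by
    have := key ((m : ℤ) - n)
    push_cast at this
    simpa [hc₁] using this
  have k2 : Real.sin (c₂ * b ^ α) = Real.sin (c₂ * x₀ ^ α) := by
    have := key ((m : ℤ) + n)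
    push_cast at this
    simpa [hc₂] using this
  simp only [hF, k1, k2, sub_self]
end
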